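/- Let (H,R) be a quasitriangular Hopf algebra, M a left-left Yetter–Drinfeld module over H. Define χ⁻(m) = Σ m₍₋₁₎S(R²) ⊗ R¹·m₍₀₎ and χ⁺(m) = Σ R²·m₍₀₎ ⊗ R¹m₍₋₁₎, and let σ(x⊗m) = Σ r²R¹·m ⊗ r¹xR² for x ∈ H, m ∈ M. Then χ⁺ = σ ∘ χ⁻, i.e. the resulting ₍R₎H-bicomodule structure on M is cocommutative. -/
import Mathlib


open TensorProduct

noncomputable section

/-- Scalar multiplication by a fixed `h : H` as a `k`-linear map. -/
def smulL (k : Type) {H M : Type} [CommRing k] [Ring H] [AddCommGroup M]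
    [Module k M] [Module H M] [SMulCommClass H k M] (h : H) : M →ₗ[k] M where
  toFun m := h • m
  map_add' := smul_add h
  map_smul' c m := smul_comm h c m

/-- The module action `H ⊗ M → M` as a linear map. -/
def actT (k H M : Type) [CommRing k] [Ring H] [Algebra k H] [AddCommGroup M]
    [Module k M] [Module H M] [IsScalarTower k H M] [SMulCommClass H k M] :
    H ⊗[k] M →ₗ[k] M :=
  TensorProduct.lift
    { toFun := fun h => smulL k h
      map_add' := fun h h' => LinearMap.ext fun m => add_smul h h' m
      map_smul' := fun c h => LinearMap.ext fun m => smul_assoc c h m }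

/-- Quasitriangular structure, with the R-matrix given by a finite family
`R = ∑ i, R1 i ⊗ R2 i`, satisfying (QT1)-(QT4) and invertibility. -/
structure QT (k H : Type) [CommRing k] [Ring H] [HopfAlgebra k H]
    {ι : Type} [Fintype ι] (R1 R2 : ι → H) : Prop where
  qt1a : ∑ i, Coalgebra.counit (R := k) (R1 i) • R2 i = (1 : H)
  qt1b : ∑ i, Coalgebra.counit (R := k) (R2 i) • R1 i = (1 : H)
  qt2 : ∑ i, Coalgebra.comul (R := k) (R1 i) ⊗ₜ[k] R2 i
      = ∑ i, ∑ j, (R1 i ⊗ₜ[k] R1 j) ⊗ₜ[k] (R2 i * R2 j)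
  qt3 : ∑ i, R1 i ⊗ₜ[k] Coalgebra.comul (R := k) (R2 i)
      = ∑ i, ∑ j, (R1 i * R1 j) ⊗ₜ[k] (R2 j ⊗ₜ[k] R2 i)
  qt4 : ∀ h : H, (∑ i, R1 i ⊗ₜ[k] R2 i) * Coalgebra.comul (R := k) h
      = TensorProduct.comm k H H (Coalgebra.comul (R := k) h) * (∑ i, R1 i ⊗ₜ[k] R2 i)
  isUnit : IsUnit (∑ i, R1 i ⊗ₜ[k] R2 i)

/-- The left adjoint action `h ⊗ x ↦ h₁ x S(h₂)` as a linear map. -/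
def adjT (k H : Type) [CommRing k] [Ring H] [HopfAlgebra k H] : H ⊗[k] H →ₗ[k] H :=
  (LinearMap.mul' k H) ∘ₗ
    (LinearMap.lTensor H (LinearMap.mul' k H)) ∘ₗ
    (LinearMap.lTensor H ((TensorProduct.map (LinearMap.id : H →ₗ[k] H)
        (HopfAlgebra.antipode (R := k))) ∘ₗ (TensorProduct.comm k H H).toLinearMap)) ∘ₗ
    (TensorProduct.assoc k H H H).toLinearMap ∘ₗ
    (LinearMap.rTensor H (Coalgebra.comul (R := k)))

/-- The diagonal action of `H` on `M ⊗ N`, `h ⊗ (m ⊗ n) ↦ h₁·m ⊗ h₂·n`. -/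
def actD (k H M N : Type) [CommRing k] [Ring H] [HopfAlgebra k H]
    [AddCommGroup M] [Module k M] [Module H M] [IsScalarTower k H M] [SMulCommClass H k M]
    [AddCommGroup N] [Module k N] [Module H N] [IsScalarTower k H N] [SMulCommClass H k N] :
    H ⊗[k] (M ⊗[k] N) →ₗ[k] M ⊗[k] N :=
  (TensorProduct.map (actT k H M) (actT k H N)) ∘ₗ
    (TensorProduct.tensorTensorTensorComm k H H M N).toLinearMap ∘ₗ
    (LinearMap.rTensor (M ⊗[k] N) (Coalgebra.comul (R := k)))

/-- Left-hand side of the Yetter-Drinfeld compatibility condition,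
`h ⊗ m ↦ h₁ m₍₋₁₎ ⊗ h₂ · m₍₀₎`, relative to an action map `act` and coaction `lam`. -/
def ydLa (k H M : Type) [CommRing k] [Ring H] [HopfAlgebra k H] [AddCommGroup M] [Module k M]
    (act : H ⊗[k] M →ₗ[k] M) (lam : M →ₗ[k] H ⊗[k] M) : H ⊗[k] M →ₗ[k] H ⊗[k] M :=
  (TensorProduct.map (LinearMap.mul' k H) act) ∘ₗ
    (TensorProduct.tensorTensorTensorComm k H H H M).toLinearMap ∘ₗ
    (TensorProduct.map (Coalgebra.comul (R := k)) lam)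

/-- Right-hand side of the Yetter-Drinfeld compatibility condition,
`h ⊗ m ↦ (h₁·m)₍₋₁₎ h₂ ⊗ (h₁·m)₍₀₎`. -/
def ydRa (k H M : Type) [CommRing k] [Ring H] [HopfAlgebra k H] [AddCommGroup M] [Module k M]
    (act : H ⊗[k] M →ₗ[k] M) (lam : M →ₗ[k] H ⊗[k] M) : H ⊗[k] M →ₗ[k] H ⊗[k] M :=
  (LinearMap.rTensor M ((LinearMap.mul' k H) ∘ₗ (TensorProduct.comm k H H).toLinearMap)) ∘ₗ
    (TensorProduct.assoc k H H M).symm.toLinearMap ∘ₗ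
    (LinearMap.lTensor H (lam ∘ₗ act)) ∘ₗ
    (TensorProduct.assoc k H H M).toLinearMap ∘ₗ
    (LinearMap.rTensor M (TensorProduct.comm k H H).toLinearMap) ∘ₗ
    (LinearMap.rTensor M (Coalgebra.comul (R := k)))


section Cocommutative

variable (k H M : Type) [Field k] [Ring H] [HopfAlgebra k H]
variable [AddCommGroup M] [Module k M] [Module H M] [IsScalarTower k H M] [SMulCommClass H k M]
variable {ι : Type} [Fintype ι] (R1 R2 : ι → H)

/-- The induced left `₍R₎H`-comodule structure `χ⁻(m) = ∑ m₍₋₁₎S(R²) ⊗ R¹·m₍₀₎`. -/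
def chiMinus (lam : M →ₗ[k] H ⊗[k] M) : M →ₗ[k] H ⊗[k] M :=
  ∑ i, (TensorProduct.map (LinearMap.mulRight k (HopfAlgebra.antipode (R := k) (R2 i)))
    (smulL k (R1 i) : M →ₗ[k] M)) ∘ₗ lam

/-- The induced right `₍R₎H`-comodule structure `χ⁺(m) = ∑ R²·m₍₀₎ ⊗ R¹m₍₋₁₎`. -/
def chiPlus (lam : M →ₗ[k] H ⊗[k] M) : M →ₗ[k] M ⊗[k] H :=
  ∑ i, (TensorProduct.map (smulL k (R2 i) : M →ₗ[k] M) (LinearMap.mulLeft k (R1 i))) ∘ₗ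
    (TensorProduct.comm k H M).toLinearMap ∘ₗ lam

/-- The half-braiding `σ(x ⊗ m) = ∑ r²R¹·m ⊗ r¹xR²`. -/
def sigmaMap : H ⊗[k] M →ₗ[k] M ⊗[k] H :=
  ∑ j, ∑ i, (TensorProduct.map (smulL k (R2 j * R1 i) : M →ₗ[k] M)
      ((LinearMap.mulLeft k (R1 j)) ∘ₗ (LinearMap.mulRight k (R2 i)))) ∘ₗ
    (TensorProduct.comm k H M).toLinearMap

/-- For a quasitriangular Hopf algebra `(H,R)` and a left-left
Yetter–Drinfeld module `M`, the induced `₍R₎H`-bicomodule structure on `M` is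
cocommutative: `χ⁺ = σ ∘ χ⁻`. -/
theorem yd_bicomodule_cocommutative (hqt : QT k H R1 R2)
    (lam : M →ₗ[k] H ⊗[k] M)
    (hcounit : ∀ m : M, (TensorProduct.lid k M)
        ((LinearMap.rTensor M (Coalgebra.counit (R := k))) (lam m)) = m)
    (hcoassoc : (LinearMap.rTensor M (Coalgebra.comul (R := k))) ∘ₗ lam
        = (TensorProduct.assoc k H H M).symm.toLinearMap ∘ₗ
          (LinearMap.lTensor H lam) ∘ₗ lam)
    (hyd : ydLa k H M (actT k H M) lam = ydRa k H M (actT k H M) lam) :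
    chiPlus k H M R1 R2 lam = (sigmaMap k H M R1 R2) ∘ₗ (chiMinus k H M R1 R2 lam) := by
  classical
  -- Key identity: ∑ᵢⱼ R¹ᵢR¹ⱼ ⊗ S(R²ⱼ)R²ᵢ = 1 ⊗ 1, from (QT3) and the antipode axiom.
  have key : (∑ i, ∑ j, (R1 i * R1 j) ⊗ₜ[k]
      (HopfAlgebra.antipode (R := k) (R2 j) * R2 i)) = (1 : H) ⊗ₜ[k] (1 : H) := by
    have h3 := congrArg (LinearMap.lTensor H ((LinearMap.mul' k H) ∘ₗ
        (LinearMap.rTensor H (HopfAlgebra.antipode (R := k))))) hqt.qt3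
    simp only [map_sum, LinearMap.lTensor_tmul, LinearMap.coe_comp, Function.comp_apply,
      LinearMap.rTensor_tmul, LinearMap.mul'_apply,
      HopfAlgebra.mul_antipode_rTensor_comul_apply] at h3
    rw [← h3]
    have h1 : ∀ i, (R1 i) ⊗ₜ[k] (algebraMap k H (Coalgebra.counit (R := k) (R2 i)))
        = ((Coalgebra.counit (R := k) (R2 i)) • R1 i) ⊗ₜ[k] (1 : H) := by
      intro i
      rw [Algebra.algebraMap_eq_smul_one, tmul_smul, smul_tmul']
    simp only [h1, ← TensorProduct.sum_tmul, hqt.qt1b]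
  -- Reduce to a pointwise statement about `lam m`.
  apply LinearMap.ext
  intro m
  simp only [chiPlus, chiMinus, LinearMap.sum_apply, LinearMap.coe_comp, Function.comp_apply,
    LinearEquiv.coe_coe]
  generalize lam m = t
  induction t using TensorProduct.induction_on with
  | zero => simp
  | add a b ha hb =>
    simp only [map_add, Finset.sum_add_distrib] at ha hb ⊢
    rw [ha, hb]
  | tmul x n =>
    -- Pure tensor case: the actual computation.
    simp only [TensorProduct.map_tmul, TensorProduct.comm_tmul, map_sum, sigmaMap,
      LinearMap.sum_apply, LinearMap.coe_comp, Function.comp_apply, LinearEquiv.coe_coe,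
      LinearMap.mulLeft_apply, LinearMap.mulRight_apply]
    -- Define, for each j, the bilinear "insertion" map B j.
    set S : H →ₗ[k] H := HopfAlgebra.antipode (R := k) with hS
    have main : ∀ j : ι,
        (∑ i, ∑ p, ((smulL k (R2 j * R1 i) : M →ₗ[k] M) ((smulL k (R1 p) : M →ₗ[k] M) n))
          ⊗ₜ[k] (R1 j * ((x * S (R2 p)) * R2 i)))
        = ((smulL k (R2 j) : M →ₗ[k] M) n) ⊗ₜ[k] (R1 j * x) := by
      intro j
      let act : H →ₗ[k] M := (actT k H M) ∘ₗ ((TensorProduct.mk k H M).flip n)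
      let B : H ⊗[k] H →ₗ[k] M ⊗[k] H :=
        TensorProduct.map ((smulL k (R2 j) : M →ₗ[k] M) ∘ₗ act)
          (LinearMap.mulLeft k (R1 j * x))
      have hB := congrArg B key
      simp only [B, act, map_sum, TensorProduct.map_tmul, LinearMap.coe_comp,
        Function.comp_apply, LinearMap.flip_apply, TensorProduct.mk_apply,
        LinearMap.mulLeft_apply] at hB
      have hact : ∀ h : H, (actT k H M) (h ⊗ₜ[k] n) = h • n := fun h => rfl
      simp only [hact] at hB
      calc (∑ i, ∑ p, ((smulL k (R2 j * R1 i) : M →ₗ[k] M)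
              ((smulL k (R1 p) : M →ₗ[k] M) n)) ⊗ₜ[k] (R1 j * ((x * S (R2 p)) * R2 i)))
          = ∑ i, ∑ p, ((smulL k (R2 j) : M →ₗ[k] M) ((R1 i * R1 p) • n))
              ⊗ₜ[k] (R1 j * x * (S (R2 p) * R2 i)) := by
            refine Finset.sum_congr rfl fun i _ => Finset.sum_congr rfl fun p _ => ?_
            congr 1
            · show (R2 j * R1 i) • ((R1 p) • n) = R2 j • ((R1 i * R1 p) • n)
              rw [← mul_smul, ← mul_smul, mul_assoc]
            · simp only [mul_assoc]
        _ = (smulL k (R2 j) : M →ₗ[k] M) ((1 : H) • n) ⊗ₜ[k] (R1 j * x * 1) := hB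
        _ = ((smulL k (R2 j) : M →ₗ[k] M) n) ⊗ₜ[k] (R1 j * x) := by rw [one_smul, mul_one]
    calc (∑ i, ((smulL k (R2 i) : M →ₗ[k] M) n) ⊗ₜ[k] (R1 i * x))
        = ∑ j, ∑ i, ∑ p, ((smulL k (R2 j * R1 i) : M →ₗ[k] M)
            ((smulL k (R1 p) : M →ₗ[k] M) n)) ⊗ₜ[k] (R1 j * ((x * S (R2 p)) * R2 i)) := by
          refine Finset.sum_congr rfl fun j _ => (main j).symm
      _ = ∑ j, ∑ p, ∑ i, ((smulL k (R2 j * R1 i) : M →ₗ[k] M)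
            ((smulL k (R1 p) : M →ₗ[k] M) n)) ⊗ₜ[k] (R1 j * ((x * S (R2 p)) * R2 i)) :=
          Finset.sum_congr rfl fun j _ => Finset.sum_comm
      _ = ∑ p, ∑ j, ∑ i, ((smulL k (R2 j * R1 i) : M →ₗ[k] M)
            ((smulL k (R1 p) : M →ₗ[k] M) n)) ⊗ₜ[k] (R1 j * ((x * S (R2 p)) * R2 i)) :=
          Finset.sum_comm


end Cocommutative

end
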